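/- Let G be a graph on a finite vertex set V with |V| = n ≥ 5. Then the following are equivalent: (a) for every graph H on V, if every 3-element subset of V induces a disconnected subgraph in H exactly when it induces a disconnected subgraph in G (i.e. Δ₃(H) = Δ₃(G)), then H = G; (b) G has no twins and G does not belong to the family 𝒫₄. -/

import Mathlib

open SimpleGraph
set_option maxHeartbeats 1000000

section CutComplexAux

variable {V : Type*}

/-- "At least two of the three possible edges among `a`, `b`, `c`":
this characterizes connectivity of the induced subgraph on three distinct vertices. -/
def tw (G : SimpleGraph V) (a b c : V) : Prop :=
  (G.Adj a b ∧ G.Adj a c) ∨ (G.Adj a b ∧ G.Adj b c) ∨ (G.Adj a c ∧ G.Adj b c)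

lemma tw_comm1 (G : SimpleGraph V) (a b c : V) : tw G a b c ↔ tw G b a c := by
  unfold tw; rw [G.adj_comm b a]; tauto

lemma tw_comm2 (G : SimpleGraph V) (a b c : V) : tw G a b c ↔ tw G a c b := by
  unfold tw; rw [G.adj_comm c b]; tauto

lemma tw_comm3 (G : SimpleGraph V) (a b c : V) : tw G a b c ↔ tw G c b a := by
  unfold tw; rw [G.adj_comm c b, G.adj_comm c a, G.adj_comm b a]; tauto


lemma conn_char (G : SimpleGraph V) {a b c : V}
    (hab : a ≠ b) (hac : a ≠ c) (hbc : b ≠ c) :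
    (G.induce ({a, b, c} : Set V)).Connected ↔ tw G a b c := by
  have ha : a ∈ ({a, b, c} : Set V) := by simp
  have hb : b ∈ ({a, b, c} : Set V) := by simp
  have hc : c ∈ ({a, b, c} : Set V) := by simp
  constructor
  · intro h
    by_contra htw
    have noNbr : ∀ p q : ({a, b, c} : Set V),
        (∀ r : ({a, b, c} : Set V), ¬ (G.induce ({a, b, c} : Set V)).Adj p r) → p = q := by
      intro p q hp
      obtain ⟨w⟩ := h.preconnected p q
      cases w with
      | nil => rfl
      | cons hadj _ => exact absurd hadj (hp _)
    by_cases h1 : G.Adj a b <;> by_cases h2 : G.Adj a c <;> by_cases h3 : G.Adj b c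
    · exact htw (Or.inl ⟨h1, h2⟩)
    · exact htw (Or.inl ⟨h1, h2⟩)
    · exact htw (Or.inr (Or.inl ⟨h1, h3⟩))
    · -- only ab: c isolated
      have := noNbr ⟨c, hc⟩ ⟨a, ha⟩ ?_
      · exact hac (congrArg Subtype.val this).symm
      · rintro ⟨r, hr⟩ hadj
        have hadj' : G.Adj c r := hadj
        rcases hr with rfl | rfl | rfl
        · exact h2 hadj'.symm
        · exact h3 hadj'.symm
        · exact G.irrefl hadj'
    · exact htw (Or.inr (Or.inr ⟨h2, h3⟩))
    · -- only ac: b isolated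
      have := noNbr ⟨b, hb⟩ ⟨a, ha⟩ ?_
      · exact hab (congrArg Subtype.val this).symm
      · rintro ⟨r, hr⟩ hadj
        have hadj' : G.Adj b r := hadj
        rcases hr with rfl | rfl | rfl
        · exact h1 hadj'.symm
        · exact G.irrefl hadj'
        · exact h3 hadj'
    · -- only bc: a isolated
      have := noNbr ⟨a, ha⟩ ⟨b, hb⟩ ?_
      · exact hab (congrArg Subtype.val this)
      · rintro ⟨r, hr⟩ hadj
        have hadj' : G.Adj a r := hadj
        rcases hr with rfl | rfl | rfl
        · exact G.irrefl hadj'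
        · exact h1 hadj'
        · exact h2 hadj'
    · -- no edges: a isolated
      have := noNbr ⟨a, ha⟩ ⟨b, hb⟩ ?_
      · exact hab (congrArg Subtype.val this)
      · rintro ⟨r, hr⟩ hadj
        have hadj' : G.Adj a r := hadj
        rcases hr with rfl | rfl | rfl
        · exact G.irrefl hadj'
        · exact h1 hadj'
        · exact h2 hadj'
  · intro htw
    have key : (G.induce ({a, b, c} : Set V)).Reachable ⟨a, ha⟩ ⟨b, hb⟩ ∧
        (G.induce ({a, b, c} : Set V)).Reachable ⟨a, ha⟩ ⟨c, hc⟩ := by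
      rcases htw with ⟨h1, h2⟩ | ⟨h1, h2⟩ | ⟨h1, h2⟩
      · have e1 : (G.induce ({a, b, c} : Set V)).Adj ⟨a, ha⟩ ⟨b, hb⟩ := h1
        have e2 : (G.induce ({a, b, c} : Set V)).Adj ⟨a, ha⟩ ⟨c, hc⟩ := h2
        exact ⟨e1.reachable, e2.reachable⟩
      · have e1 : (G.induce ({a, b, c} : Set V)).Adj ⟨a, ha⟩ ⟨b, hb⟩ := h1
        have e2 : (G.induce ({a, b, c} : Set V)).Adj ⟨b, hb⟩ ⟨c, hc⟩ := h2
        exact ⟨e1.reachable, e1.reachable.trans e2.reachable⟩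
      · have e1 : (G.induce ({a, b, c} : Set V)).Adj ⟨a, ha⟩ ⟨c, hc⟩ := h1
        have e2 : (G.induce ({a, b, c} : Set V)).Adj ⟨c, hc⟩ ⟨b, hb⟩ := h2.symm
        exact ⟨e1.reachable.trans e2.reachable, e1.reachable⟩
    obtain ⟨Rab, Rac⟩ := key
    rw [connected_iff]
    refine ⟨?_, ⟨⟨a, ha⟩⟩⟩
    rintro ⟨p, hp⟩ ⟨q, hq⟩
    have hR : ∀ (r : V) (hr : r ∈ ({a, b, c} : Set V)),
        (G.induce ({a, b, c} : Set V)).Reachable ⟨a, ha⟩ ⟨r, hr⟩ := by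
      intro r hr
      rcases hr with rfl | rfl | rfl
      · exact Reachable.refl _
      · exact Rab
      · exact Rac
    exact (hR p hp).symm.trans (hR q hq)

lemma hyp_iff [DecidableEq V] (G H : SimpleGraph V) :
    (∀ T : Finset V, T.card = 3 →
        (¬ (H.induce (T : Set V)).Connected ↔ ¬ (G.induce (T : Set V)).Connected)) ↔
      (∀ a b c : V, a ≠ b → a ≠ c → b ≠ c → (tw H a b c ↔ tw G a b c)) := by
  constructor
  · intro h a b c hab hac hbc
    have hT := h {a, b, c} (Finset.card_eq_three.mpr ⟨a, b, c, hab, hac, hbc, rfl⟩)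
    have hco : ((({a, b, c} : Finset V) : Set V)) = ({a, b, c} : Set V) := by simp
    rw [hco, conn_char H hab hac hbc, conn_char G hab hac hbc] at hT
    exact not_iff_not.mp hT
  · intro h T hT
    obtain ⟨a, b, c, hab, hac, hbc, rfl⟩ := Finset.card_eq_three.mp hT
    have hco : ((({a, b, c} : Finset V) : Set V)) = ({a, b, c} : Set V) := by simp
    rw [hco, conn_char H hab hac hbc, conn_char G hab hac hbc]
    exact not_congr (h a b c hab hac hbc)

/-- Key implication from equality of 3-cut data at a differing pair. -/
lemma key {G H : SimpleGraph V}
    (hyp : ∀ a b c : V, a ≠ b → a ≠ c → b ≠ c → (tw H a b c ↔ tw G a b c))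
    {u v : V} (h1 : G.Adj u v) (h2 : ¬ H.Adj u v) :
    ∀ a : V, a ≠ u → a ≠ v → ((G.Adj u a ∨ G.Adj v a) ↔ (H.Adj u a ∧ H.Adj v a)) := by
  intro a hau hav
  have h3 := hyp u v a h1.ne hau.symm hav.symm
  unfold tw at h3
  tauto


def HasTwins (G : SimpleGraph V) : Prop :=
  ∃ u v : V, u ≠ v ∧ G.neighborSet u \ {v} = G.neighborSet v \ {u}

def IsP4 (G : SimpleGraph V) : Prop :=
  ∃ (x y z w : V) (V' : Set V),
    x ≠ y ∧ x ≠ z ∧ x ≠ w ∧ y ≠ z ∧ y ≠ w ∧ z ≠ w ∧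
    V' ⊆ ({x, y, z, w} : Set V)ᶜ ∧
    G.neighborSet x = V' ∪ {y} ∧
    G.neighborSet y = V' ∪ {x, z} ∧
    G.neighborSet z = V' ∪ {y, w} ∧
    G.neighborSet w = V' ∪ {z}

lemma aux {G H : SimpleGraph V}
    (hyp : ∀ a b c : V, a ≠ b → a ≠ c → b ≠ c → (tw H a b c ↔ tw G a b c))
    {u v a : V} (huv : G.Adj u v) (hH : ¬ H.Adj u v)
    (hau : a ≠ u) (hav : a ≠ v) (hGua : G.Adj u a) (hGva : ¬ G.Adj v a) :
    HasTwins G ∨ IsP4 G := by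
  have hyp' : ∀ a b c : V, a ≠ b → a ≠ c → b ≠ c → (tw G a b c ↔ tw H a b c) :=
    fun a b c h1 h2 h3 => (hyp a b c h1 h2 h3).symm
  have keyuv := key hyp huv hH
  have hHa := (keyuv a hau hav).mp (Or.inl hGua)
  have hHva : H.Adj v a := hHa.2
  have keyva := key hyp' hHva hGva
  by_cases hB : ∃ b, b ≠ u ∧ b ≠ v ∧ G.Adj a b ∧ ¬ G.Adj v b
  · -- P4 case
    obtain ⟨b, hbu, hbv, hGab, hGvb⟩ := hB
    have hab : a ≠ b := hGab.ne
    have h4 := keyva b hbv hGab.ne'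
    have hHvb : ¬ H.Adj v b := fun h => hGvb ((h4.mp (Or.inl h)).1)
    have hHab : ¬ H.Adj a b := fun h => hGvb ((h4.mp (Or.inr h)).1)
    have h5 := keyuv b hbu hbv
    have hGub : ¬ G.Adj u b := fun h => hHvb ((h5.mp (Or.inl h)).2)
    have keyab := key hyp hGab hHab
    have h6 := (keyab u hau.symm hbu.symm).mp (Or.inl hGua.symm)
    have hHub : H.Adj u b := h6.2.symm
    have keyub := key hyp' hHub hGub
    have s1 : ∀ c, c ≠ u → c ≠ v → c ≠ a →
        (G.Adj u c ∨ G.Adj v c) → G.Adj v c ∧ G.Adj a c := by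
      intro c hcu hcv hca hor
      exact (keyva c hcv hca).mp (Or.inl ((keyuv c hcu hcv).mp hor).2)
    have s2 : ∀ c, c ≠ a → c ≠ b → c ≠ u →
        (G.Adj a c ∨ G.Adj b c) → G.Adj u c ∧ G.Adj b c := by
      intro c hca hcb hcu hor
      exact (keyub c hcu hcb).mp (Or.inr ((keyab c hca hcb).mp hor).2)
    have s3 : ∀ c, c ≠ u → c ≠ v → c ≠ b →
        (G.Adj u c ∨ G.Adj v c) → G.Adj u c ∧ G.Adj b c := by
      intro c hcu hcv hcb hor
      exact (keyub c hcu hcb).mp (Or.inl ((keyuv c hcu hcv).mp hor).1)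
    have s4 : ∀ c, c ≠ a → c ≠ b → c ≠ v →
        (G.Adj a c ∨ G.Adj b c) → G.Adj v c ∧ G.Adj a c := by
      intro c hca hcb hcv hor
      exact (keyva c hcv hca).mp (Or.inr ((keyab c hca hcb).mp hor).1)
    right
    refine ⟨v, u, a, b, G.neighborSet v \ {v, u, a, b},
      huv.ne', hav.symm, hbv.symm, hau.symm, hbu.symm, hab, ?_, ?_, ?_, ?_, ?_⟩
    · intro c hc
      exact hc.2
    · -- N(v) = V' ∪ {u}
      ext c
      simp only [mem_neighborSet, Set.mem_union, Set.mem_diff, Set.mem_singleton_iff,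
        Set.mem_insert_iff]
      constructor
      · intro hvc
        by_cases hcu : c = u
        · exact Or.inr hcu
        · refine Or.inl ⟨hvc, ?_⟩
          rintro (rfl | rfl | rfl | rfl)
          · exact G.irrefl hvc
          · exact hcu rfl
          · exact hGva hvc
          · exact hGvb hvc
      · rintro (⟨hvc, _⟩ | rfl)
        · exact hvc
        · exact huv.symm
    · -- N(u) = V' ∪ {v, a}
      ext c
      simp only [mem_neighborSet, Set.mem_union, Set.mem_diff, Set.mem_singleton_iff,
        Set.mem_insert_iff]
      constructor
      · intro huc
        by_cases hcv : c = v
        · exact Or.inr (Or.inl hcv)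
        by_cases hca : c = a
        · exact Or.inr (Or.inr hca)
        refine Or.inl ⟨(s1 c huc.ne' hcv hca (Or.inl huc)).1, ?_⟩
        rintro (rfl | rfl | rfl | rfl)
        · exact hcv rfl
        · exact G.irrefl huc
        · exact hca rfl
        · exact hGub huc
      · rintro (⟨hvc, hcq⟩ | rfl | rfl)
        · have hcv : c ≠ v := fun h => hcq (Or.inl h)
          have hcu : c ≠ u := fun h => hcq (Or.inr (Or.inl h))
          have hcb : c ≠ b := fun h => hcq (Or.inr (Or.inr (Or.inr h)))
          exact (s3 c hcu hcv hcb (Or.inr hvc)).1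
        · exact huv
        · exact hGua
    · -- N(a) = V' ∪ {u, b}
      ext c
      simp only [mem_neighborSet, Set.mem_union, Set.mem_diff, Set.mem_singleton_iff,
        Set.mem_insert_iff]
      constructor
      · intro hac
        by_cases hcu : c = u
        · exact Or.inr (Or.inl hcu)
        by_cases hcb : c = b
        · exact Or.inr (Or.inr hcb)
        have hcv : c ≠ v := fun h => hGva (h ▸ hac).symm
        refine Or.inl ⟨(s4 c hac.ne' hcb hcv (Or.inl hac)).1, ?_⟩
        rintro (rfl | rfl | rfl | rfl)
        · exact hcv rfl
        · exact hcu rfl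
        · exact G.irrefl hac
        · exact hcb rfl
      · rintro (⟨hvc, hcq⟩ | rfl | rfl)
        · have hcv : c ≠ v := fun h => hcq (Or.inl h)
          have hcu : c ≠ u := fun h => hcq (Or.inr (Or.inl h))
          have hca : c ≠ a := fun h => hcq (Or.inr (Or.inr (Or.inl h)))
          exact (s1 c hcu hcv hca (Or.inr hvc)).2
        · exact hGua.symm
        · exact hGab
    · -- N(b) = V' ∪ {a}
      ext c
      simp only [mem_neighborSet, Set.mem_union, Set.mem_diff, Set.mem_singleton_iff,
        Set.mem_insert_iff]
      constructor
      · intro hbc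
        by_cases hca : c = a
        · exact Or.inr hca
        have hcu : c ≠ u := fun h => hGub (h ▸ hbc).symm
        have hcv : c ≠ v := fun h => hGvb (h ▸ hbc).symm
        refine Or.inl ⟨(s4 c hca hbc.ne' hcv (Or.inr hbc)).1, ?_⟩
        rintro (rfl | rfl | rfl | rfl)
        · exact hcv rfl
        · exact hcu rfl
        · exact hca rfl
        · exact G.irrefl hbc
      · rintro (⟨hvc, hcq⟩ | rfl)
        · have hcv : c ≠ v := fun h => hcq (Or.inl h)
          have hcu : c ≠ u := fun h => hcq (Or.inr (Or.inl h))
          have hcb : c ≠ b := fun h => hcq (Or.inr (Or.inr (Or.inr h)))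
          exact (s3 c hcu hcv hcb (Or.inr hvc)).2
        · exact hGab.symm
  · -- twins a v
    push_neg at hB
    left
    refine ⟨a, v, hav, ?_⟩
    ext c
    simp only [Set.mem_diff, mem_neighborSet, Set.mem_singleton_iff]
    constructor
    · rintro ⟨hac, hcv⟩
      refine ⟨?_, hac.ne'⟩
      by_cases hcu : c = u
      · subst hcu; exact huv.symm
      · exact hB c hcu hcv hac
    · rintro ⟨hvc, hca⟩
      refine ⟨?_, hvc.ne'⟩
      by_cases hcu : c = u
      · subst hcu; exact hGua.symm
      · exact ((keyva c hvc.ne' hca).mp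
          (Or.inl ((keyuv c hcu hvc.ne').mp (Or.inr hvc)).2)).2

lemma backward {G : SimpleGraph V} (hT : ¬ HasTwins G) (hP : ¬ IsP4 G)
    (H : SimpleGraph V)
    (hyp : ∀ a b c : V, a ≠ b → a ≠ c → b ≠ c → (tw H a b c ↔ tw G a b c)) :
    H = G := by
  have hyp' : ∀ a b c : V, a ≠ b → a ≠ c → b ≠ c → (tw G a b c ↔ tw H a b c) :=
    fun a b c h1 h2 h3 => (hyp a b c h1 h2 h3).symm
  by_contra hne
  by_cases hGH : ∃ p q, G.Adj p q ∧ ¬ H.Adj p q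
  · obtain ⟨p, q, h1, h2⟩ := hGH
    by_cases hA : ∀ c, c ≠ p → c ≠ q → (G.Adj p c ↔ G.Adj q c)
    · refine hT ⟨p, q, h1.ne, ?_⟩
      ext c
      simp only [Set.mem_diff, mem_neighborSet, Set.mem_singleton_iff]
      constructor
      · rintro ⟨hpc, hcq⟩
        exact ⟨(hA c hpc.ne' hcq).mp hpc, hpc.ne'⟩
      · rintro ⟨hqc, hcp⟩
        exact ⟨(hA c hcp hqc.ne').mpr hqc, hqc.ne'⟩
    · push_neg at hA
      obtain ⟨c, hcp, hcq, hiff⟩ := hA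
      have hcase : (G.Adj p c ∧ ¬ G.Adj q c) ∨ (G.Adj q c ∧ ¬ G.Adj p c) := by tauto
      rcases hcase with ⟨ha1, ha2⟩ | ⟨ha1, ha2⟩
      · rcases aux hyp h1 h2 hcp hcq ha1 ha2 with h | h
        · exact hT h
        · exact hP h
      · rcases aux hyp h1.symm (fun h => h2 h.symm) hcq hcp ha1 ha2 with h | h
        · exact hT h
        · exact hP h
  · push_neg at hGH
    have hHG : ∃ u v, H.Adj u v ∧ ¬ G.Adj u v := by
      by_contra h
      push_neg at h
      exact hne (SimpleGraph.ext (by ext u v; exact ⟨h u v, hGH u v⟩))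
    obtain ⟨u, v, h1, h2⟩ := hHG
    have keyuv := key hyp' h1 h2
    refine hT ⟨u, v, h1.ne, ?_⟩
    ext c
    simp only [Set.mem_diff, mem_neighborSet, Set.mem_singleton_iff]
    constructor
    · rintro ⟨huc, hcv⟩
      exact ⟨((keyuv c huc.ne' hcv).mp (Or.inl (hGH u c huc))).2, huc.ne'⟩
    · rintro ⟨hvc, hcu⟩
      exact ⟨((keyuv c hcu hvc.ne').mp (Or.inr (hGH v c hvc))).1, hvc.ne'⟩

def toggle (G : SimpleGraph V) (u v : V) : SimpleGraph V where
  Adj a b := (G.Adj a b ∧ ¬((a = u ∧ b = v) ∨ (a = v ∧ b = u))) ∨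
             (¬ G.Adj a b ∧ a ≠ b ∧ ((a = u ∧ b = v) ∨ (a = v ∧ b = u)))
  symm := by
    constructor
    intro a b h
    have h1 : G.Adj a b ↔ G.Adj b a := G.adj_comm a b
    have h2 : a = b ↔ b = a := eq_comm
    unfold Ne at *
    tauto
  loopless := by
    constructor
    intro a h
    rcases h with ⟨h, _⟩ | ⟨_, hne, _⟩
    · exact G.irrefl h
    · exact hne rfl

lemma toggle_adj_same (G : SimpleGraph V) (u v a b : V)
    (h : ¬ ((a = u ∧ b = v) ∨ (a = v ∧ b = u))) :
    (toggle G u v).Adj a b ↔ G.Adj a b := by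
  show (G.Adj a b ∧ ¬ _) ∨ (¬ G.Adj a b ∧ a ≠ b ∧ _) ↔ G.Adj a b
  tauto

lemma toggle_adj_flip (G : SimpleGraph V) (u v a b : V) (hne : a ≠ b)
    (h : (a = u ∧ b = v) ∨ (a = v ∧ b = u)) :
    (toggle G u v).Adj a b ↔ ¬ G.Adj a b := by
  show (G.Adj a b ∧ ¬ _) ∨ (¬ G.Adj a b ∧ a ≠ b ∧ _) ↔ ¬ G.Adj a b
  tauto

lemma toggle_tw (G : SimpleGraph V) (u v : V)
    (htw : ∀ c, c ≠ u → c ≠ v → (G.Adj u c ↔ G.Adj v c)) :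
    ∀ a b c : V, a ≠ b → a ≠ c → b ≠ c →
      (tw (toggle G u v) a b c ↔ tw G a b c) := by
  intro a b c hab hac hbc
  by_cases s1 : (a = u ∧ b = v) ∨ (a = v ∧ b = u)
  · have e1 := toggle_adj_flip G u v a b hab s1
    rcases s1 with ⟨rfl, rfl⟩ | ⟨rfl, rfl⟩
    · have e2 := toggle_adj_same G a b a c (by rintro (⟨h1, h2⟩ | ⟨h1, h2⟩) <;> simp_all)
      have e3 := toggle_adj_same G a b b c (by rintro (⟨h1, h2⟩ | ⟨h1, h2⟩) <;> simp_all)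
      have ht := htw c (Ne.symm hac) (Ne.symm hbc)
      simp only [tw, e1, e2, e3]
      tauto
    · have e2 := toggle_adj_same G b a a c (by rintro (⟨h1, h2⟩ | ⟨h1, h2⟩) <;> simp_all)
      have e3 := toggle_adj_same G b a b c (by rintro (⟨h1, h2⟩ | ⟨h1, h2⟩) <;> simp_all)
      have ht := (htw c (Ne.symm hbc) (Ne.symm hac)).symm
      simp only [tw, e1, e2, e3]
      tauto
  · have e1 := toggle_adj_same G u v a b s1
    by_cases s2 : (a = u ∧ c = v) ∨ (a = v ∧ c = u)
    · have e2 := toggle_adj_flip G u v a c hac s2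
      rcases s2 with ⟨rfl, rfl⟩ | ⟨rfl, rfl⟩
      · have e3 := toggle_adj_same G a c b c (by rintro (⟨h1, h2⟩ | ⟨h1, h2⟩) <;> simp_all)
        have ht := htw b (Ne.symm hab) hbc
        have hc : G.Adj c b ↔ G.Adj b c := G.adj_comm c b
        simp only [tw, e1, e2, e3]
        tauto
      · have e3 := toggle_adj_same G c a b c (by rintro (⟨h1, h2⟩ | ⟨h1, h2⟩) <;> simp_all)
        have ht := htw b hbc (Ne.symm hab)
        have hc : G.Adj c b ↔ G.Adj b c := G.adj_comm c b
        simp only [tw, e1, e2, e3]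
        tauto
    · have e2 := toggle_adj_same G u v a c s2
      by_cases s3 : (b = u ∧ c = v) ∨ (b = v ∧ c = u)
      · have e3 := toggle_adj_flip G u v b c hbc s3
        rcases s3 with ⟨rfl, rfl⟩ | ⟨rfl, rfl⟩
        · have ht := htw a hab hac
          have hc1 : G.Adj b a ↔ G.Adj a b := G.adj_comm b a
          have hc2 : G.Adj c a ↔ G.Adj a c := G.adj_comm c a
          simp only [tw, e1, e2, e3]
          tauto
        · have ht := htw a hac hab
          have hc1 : G.Adj b a ↔ G.Adj a b := G.adj_comm b a
          have hc2 : G.Adj c a ↔ G.Adj a c := G.adj_comm c a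
          simp only [tw, e1, e2, e3]
          tauto
      · have e3 := toggle_adj_same G u v b c s3
        simp only [tw, e1, e2, e3]

variable {G : SimpleGraph V} {x y z w : V} {V' : Set V}

lemma swapL'
    (hxy : x ≠ y) (hxz : x ≠ z) (hxw : x ≠ w) (hyz : y ≠ z) (hyw : y ≠ w) (hzw : z ≠ w)
    (hsub : V' ⊆ ({x, y, z, w} : Set V)ᶜ)
    (hNx : G.neighborSet x = V' ∪ {y})
    (hNy : G.neighborSet y = V' ∪ {x, z})
    (hNz : G.neighborSet z = V' ∪ {y, w})
    (hNw : G.neighborSet w = V' ∪ {z}) :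
    ∀ b c : V, b ≠ y → b ≠ z → c ≠ y → c ≠ z → b ≠ c →
      (tw G z b c ↔ tw G y b c) := by
  have hxV : x ∉ V' := fun h => hsub h (by simp)
  have hyV : y ∉ V' := fun h => hsub h (by simp)
  have hzV : z ∉ V' := fun h => hsub h (by simp)
  have hwV : w ∉ V' := fun h => hsub h (by simp)
  have Ax : ∀ q, G.Adj x q ↔ (q ∈ V' ∨ q = y) := by
    intro q; rw [← mem_neighborSet, hNx]; simp; tauto
  have Ay : ∀ q, G.Adj y q ↔ (q ∈ V' ∨ q = x ∨ q = z) := by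
    intro q; rw [← mem_neighborSet, hNy]; simp; tauto
  have Az : ∀ q, G.Adj z q ↔ (q ∈ V' ∨ q = y ∨ q = w) := by
    intro q; rw [← mem_neighborSet, hNz]; simp; tauto
  have Aw : ∀ q, G.Adj w q ↔ (q ∈ V' ∨ q = z) := by
    intro q; rw [← mem_neighborSet, hNw]; simp; tauto
  intro b c hby hbz hcy hcz hbc
  by_cases hbx : b = x
  · subst hbx
    have f1 : G.Adj y b := by rw [Ay]; tauto
    have f2 : ¬ G.Adj z b := by rw [Az]; rintro (h | h | h) <;> simp_all
    by_cases hcw : c = w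
    · subst hcw
      have f3 : ¬ G.Adj y c := by rw [Ay]; rintro (h | h | h) <;> simp_all
      have f4 : G.Adj z c := by rw [Az]; tauto
      have f5 : ¬ G.Adj b c := by rw [Ax]; rintro (h | h) <;> simp_all
      simp only [tw]; tauto
    · have f3 : G.Adj y c ↔ c ∈ V' := by rw [Ay]; constructor <;> intro h <;> try tauto
      have f4 : G.Adj z c ↔ c ∈ V' := by
        rw [Az]; constructor <;> intro h
        · rcases h with h | h | h <;> simp_all
        · tauto
      have f5 : G.Adj b c ↔ c ∈ V' := by
        rw [Ax]; constructor <;> intro h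
        · rcases h with h | h <;> simp_all
        · tauto
      simp only [tw]; tauto
  · by_cases hbw : b = w
    · subst hbw
      have f1 : ¬ G.Adj y b := by rw [Ay]; rintro (h | h | h) <;> simp_all
      have f2 : G.Adj z b := by rw [Az]; tauto
      by_cases hcx : c = x
      · subst hcx
        have f3 : G.Adj y c := by rw [Ay]; tauto
        have f4 : ¬ G.Adj z c := by rw [Az]; rintro (h | h | h) <;> simp_all
        have f5 : ¬ G.Adj b c := by rw [Aw]; rintro (h | h) <;> simp_all
        simp only [tw]; tauto
      · have f3 : G.Adj y c ↔ c ∈ V' := by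
          rw [Ay]; constructor <;> intro h
          · rcases h with h | h | h <;> simp_all
          · tauto
        have f4 : G.Adj z c ↔ c ∈ V' := by
          rw [Az]; constructor <;> intro h
          · rcases h with h | h | h <;> simp_all
          · tauto
        have f5 : G.Adj b c ↔ c ∈ V' := by
          rw [Aw]; constructor <;> intro h
          · rcases h with h | h <;> simp_all
          · tauto
        simp only [tw]; tauto
    · have f1 : G.Adj y b ↔ b ∈ V' := by
        rw [Ay]; constructor <;> intro h
        · rcases h with h | h | h <;> simp_all
        · tauto
      have f2 : G.Adj z b ↔ b ∈ V' := by
        rw [Az]; constructor <;> intro h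
        · rcases h with h | h | h <;> simp_all
        · tauto
      by_cases hcx : c = x
      · subst hcx
        have f3 : G.Adj y c := by rw [Ay]; tauto
        have f4 : ¬ G.Adj z c := by rw [Az]; rintro (h | h | h) <;> simp_all
        have f5 : G.Adj b c ↔ b ∈ V' := by
          rw [G.adj_comm, Ax]; constructor <;> intro h
          · rcases h with h | h <;> simp_all
          · tauto
        simp only [tw]; tauto
      · by_cases hcw : c = w
        · subst hcw
          have f3 : ¬ G.Adj y c := by rw [Ay]; rintro (h | h | h) <;> simp_all
          have f4 : G.Adj z c := by rw [Az]; tauto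
          have f5 : G.Adj b c ↔ b ∈ V' := by
            rw [G.adj_comm, Aw]; constructor <;> intro h
            · rcases h with h | h <;> simp_all
            · tauto
          simp only [tw]; tauto
        · have f3 : G.Adj y c ↔ c ∈ V' := by
            rw [Ay]; constructor <;> intro h
            · rcases h with h | h | h <;> simp_all
            · tauto
          have f4 : G.Adj z c ↔ c ∈ V' := by
            rw [Az]; constructor <;> intro h
            · rcases h with h | h | h <;> simp_all
            · tauto
          simp only [tw]; tauto

variable [DecidableEq V]

lemma swapM
    (hxy : x ≠ y) (hxz : x ≠ z) (hxw : x ≠ w) (hyz : y ≠ z) (hyw : y ≠ w) (hzw : z ≠ w)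
    (hsub : V' ⊆ ({x, y, z, w} : Set V)ᶜ)
    (hNx : G.neighborSet x = V' ∪ {y})
    (hNy : G.neighborSet y = V' ∪ {x, z})
    (hNz : G.neighborSet z = V' ∪ {y, w})
    (hNw : G.neighborSet w = V' ∪ {z}) :
    ∀ a b c : V, a ≠ b → a ≠ c → b ≠ c →
      (tw G (Equiv.swap y z a) (Equiv.swap y z b) (Equiv.swap y z c) ↔ tw G a b c) := by
  have L' := swapL' hxy hxz hxw hyz hyw hzw hsub hNx hNy hNz hNw
  intro a b c hab hac hbc
  by_cases hay : a = y
  · subst hay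
    rw [Equiv.swap_apply_left]
    by_cases hbz : b = z
    · subst hbz
      rw [Equiv.swap_apply_right, Equiv.swap_apply_of_ne_of_ne (Ne.symm hac) (Ne.symm hbc)]
      exact tw_comm1 G b a c
    · by_cases hcz : c = z
      · subst hcz
        rw [Equiv.swap_apply_right, Equiv.swap_apply_of_ne_of_ne (Ne.symm hab) hbz]
        exact tw_comm3 G c b a
      · rw [Equiv.swap_apply_of_ne_of_ne (Ne.symm hab) hbz,
          Equiv.swap_apply_of_ne_of_ne (Ne.symm hac) hcz]
        exact L' b c (Ne.symm hab) hbz (Ne.symm hac) hcz hbc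
  · by_cases haz : a = z
    · subst haz
      rw [Equiv.swap_apply_right]
      by_cases hby : b = y
      · subst hby
        rw [Equiv.swap_apply_left, Equiv.swap_apply_of_ne_of_ne (Ne.symm hbc) (Ne.symm hac)]
        exact tw_comm1 G b a c
      · by_cases hcy : c = y
        · subst hcy
          rw [Equiv.swap_apply_left, Equiv.swap_apply_of_ne_of_ne hby (Ne.symm hab)]
          exact tw_comm3 G c b a
        · rw [Equiv.swap_apply_of_ne_of_ne hby (Ne.symm hab),
            Equiv.swap_apply_of_ne_of_ne hcy (Ne.symm hac)]
          exact (L' b c hby (Ne.symm hab) hcy (Ne.symm hac) hbc).symm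
    · rw [Equiv.swap_apply_of_ne_of_ne hay haz]
      by_cases hby : b = y
      · subst hby
        rw [Equiv.swap_apply_left]
        by_cases hcz : c = z
        · subst hcz
          rw [Equiv.swap_apply_right]
          exact tw_comm2 G a c b
        · rw [Equiv.swap_apply_of_ne_of_ne (Ne.symm hbc) hcz]
          exact (tw_comm1 G a z c).trans
            ((L' a c hay haz (Ne.symm hbc) hcz hac).trans (tw_comm1 G b a c))
      · by_cases hbz : b = z
        · subst hbz
          rw [Equiv.swap_apply_right]
          by_cases hcy : c = y
          · subst hcy
            rw [Equiv.swap_apply_left]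
            exact tw_comm2 G a c b
          · rw [Equiv.swap_apply_of_ne_of_ne hcy (Ne.symm hbc)]
            exact (tw_comm1 G a y c).trans
              (((L' a c hay haz hcy (Ne.symm hbc) hac).symm).trans (tw_comm1 G b a c))
        · rw [Equiv.swap_apply_of_ne_of_ne hby hbz]
          by_cases hcy : c = y
          · subst hcy
            rw [Equiv.swap_apply_left]
            exact (tw_comm3 G a b z).trans
              ((L' b a hby hbz hay haz (Ne.symm hab)).trans (tw_comm3 G c b a))
          · by_cases hcz : c = z
            · subst hcz
              rw [Equiv.swap_apply_right]
              exact (tw_comm3 G a b y).trans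
                (((L' b a hby hbz hay haz (Ne.symm hab)).symm).trans (tw_comm3 G c b a))
            · rw [Equiv.swap_apply_of_ne_of_ne hcy hcz]
end CutComplexAux

/-- Uniqueness of graph reconstruction from the 3-cut complex:
a graph `G` on `n ≥ 5` vertices is the unique graph with its 3-cut complex
iff `G` has no twins and `G` is not in the family `𝒫₄`. -/
theorem stmt_0 {V : Type*} [Fintype V] [DecidableEq V] (G : SimpleGraph V)
    (hn : 5 ≤ Fintype.card V) :
    (∀ H : SimpleGraph V,
        (∀ T : Finset V, T.card = 3 →
          (¬ (H.induce (T : Set V)).Connected ↔ ¬ (G.induce (T : Set V)).Connected)) →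
        H = G) ↔
      ((¬ ∃ u v : V, u ≠ v ∧
          G.neighborSet u \ {v} = G.neighborSet v \ {u}) ∧
        ¬ ∃ (x y z w : V) (V' : Set V),
          x ≠ y ∧ x ≠ z ∧ x ≠ w ∧ y ≠ z ∧ y ≠ w ∧ z ≠ w ∧
          V' ⊆ ({x, y, z, w} : Set V)ᶜ ∧
          G.neighborSet x = V' ∪ {y} ∧
          G.neighborSet y = V' ∪ {x, z} ∧
          G.neighborSet z = V' ∪ {y, w} ∧
          G.neighborSet w = V' ∪ {z}) := by
  constructor
  · intro hA
    constructor
    · rintro ⟨u, v, huv, hset⟩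
      have htw : ∀ c, c ≠ u → c ≠ v → (G.Adj u c ↔ G.Adj v c) := by
        intro c hcu hcv
        have h := Set.ext_iff.mp hset c
        simp only [Set.mem_diff, SimpleGraph.mem_neighborSet, Set.mem_singleton_iff] at h
        tauto
      have hEq := hA (toggle G u v) ((hyp_iff G (toggle G u v)).mpr (toggle_tw G u v htw))
      have hf := toggle_adj_flip G u v u v huv (Or.inl ⟨rfl, rfl⟩)
      rw [hEq] at hf
      exact iff_not_self hf
    · rintro ⟨x, y, z, w, V', hxy, hxz, hxw, hyz, hyw, hzw, hsub, hNx, hNy, hNz, hNw⟩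
      have hiff : ∀ a b c : V, a ≠ b → a ≠ c → b ≠ c →
          (tw (G.comap (Equiv.swap y z)) a b c ↔ tw G a b c) := by
        intro a b c hab hac hbc
        have hcm : tw (G.comap (Equiv.swap y z)) a b c ↔
            tw G (Equiv.swap y z a) (Equiv.swap y z b) (Equiv.swap y z c) := by
          simp only [tw, SimpleGraph.comap_adj]
        rw [hcm]
        exact swapM hxy hxz hxw hyz hyw hzw hsub hNx hNy hNz hNw a b c hab hac hbc
      have hEq := hA (G.comap (Equiv.swap y z)) ((hyp_iff G _).mpr hiff)
      have hxyAdj : G.Adj x y := by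
        rw [← SimpleGraph.mem_neighborSet, hNx]; simp
      have hxzAdj : ¬ G.Adj x z := by
        rw [← SimpleGraph.mem_neighborSet, hNx]
        simp only [Set.mem_union, Set.mem_singleton_iff]
        rintro (h | h)
        · exact (hsub h) (by simp)
        · exact hyz h.symm
      have hH : (G.comap (Equiv.swap y z)).Adj x y := by rw [hEq]; exact hxyAdj
      rw [SimpleGraph.comap_adj] at hH
      rw [Equiv.swap_apply_of_ne_of_ne hxy hxz, Equiv.swap_apply_left] at hH
      exact hxzAdj hH
  · rintro ⟨h1, h2⟩ H hyp
    exact backward h1 h2 H ((hyp_iff G H).mp hyp)
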